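/- Let k ≥ 3, ℓ ≥ 1. Let R_1,…,R_r be tensors of arity n on domain size k and G_1,…,G_g column tensors of arity n on domain size k, with given tensors R̲_i, G̲_j of arity n on domain size 2^ℓ, where R_1 is non-degenerate. Suppose σ ≠ τ in Fin k, X_{σ,τ} is a 2 × k matrix of rank 2 such that R_i = R_i^{(σ,τ)} X_{σ,τ}^{⊗n} for all i (where R_i^{(σ,τ)} is the restriction of R_i to {σ,τ}), X'_{σ,τ} is an invertible k × k matrix with X_{σ,τ}·X'_{σ,τ} = [[1,0,0,…,0],[0,1,0,…,0]], and Ř_i denotes the restriction of R_i (X'_{σ,τ})^{⊗n} to {0,1} and Ǧ_j the restriction of (X'^{-1}_{σ,τ})^{⊗n} G_j to {0,1}. If there exists a 2^ℓ × 2 complex matrix M_{(2)} of rank 2 with Ř_i = R̲_i M_{(2)}^{⊗n} for all i and M_{(2)}^{⊗n} Ǧ_j = G̲_j for all j, then the 2^ℓ × k matrix M = M_{(2)} X_{σ,τ} satisfies R_i = R̲_i M^{⊗n} for all 1 ≤ i ≤ r and M^{⊗n} G_j = G̲_j for all 1 ≤ j ≤ g. -/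
import Mathlib


open Matrix BigOperators

/-- A tensor of arity `n` on domain size `k` is degenerate if it is a tensor
product of vectors. -/
def Degenerate {n k : ℕ} (R : (Fin n → Fin k) → ℂ) : Prop :=
  ∃ v : Fin n → (Fin k → ℂ), ∀ i, R i = ∏ t, v t (i t)

/-- The recognizer transform `R̲ M^{⊗n}` of a tensor `R̲` on domain `D`
under a matrix `M` with rows indexed by `D` and columns indexed by `E`. -/
noncomputable def rtrans {n : ℕ} {D E : Type*} [Fintype D] (M : Matrix D E ℂ)
    (R : (Fin n → D) → ℂ) : (Fin n → E) → ℂ :=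
  fun i => ∑ j : Fin n → D, R j * ∏ t, M (j t) (i t)

/-- The generator transform `M^{⊗n} G` of a column tensor `G` on domain `E`
under a matrix `M` with rows indexed by `D` and columns indexed by `E`. -/
noncomputable def gtrans {n : ℕ} {D E : Type*} [Fintype E] (M : Matrix D E ℂ)
    (G : (Fin n → E) → ℂ) : (Fin n → D) → ℂ :=
  fun s => ∑ i : Fin n → E, (∏ t, M (s t) (i t)) * G i

/-- The restriction `R^{(σ,τ)}` of a tensor on domain size `k` to `{σ, τ}`. -/
def restrict {n k : ℕ} (R : (Fin n → Fin k) → ℂ) (σ τ : Fin k) :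
    (Fin n → Fin 2) → ℂ :=
  fun j => R fun t => if j t = 0 then σ else τ

/-- The submatrix `(α_σ α_τ)` formed by the columns `σ` and `τ` of `M`. -/
def subM {D : Type*} {k : ℕ} (M : Matrix D (Fin k) ℂ) (σ τ : Fin k) :
    Matrix D (Fin 2) ℂ :=
  Matrix.of fun i c => if c = 0 then M i σ else M i τ

/-- The `t`-th signature matrix `A_R(t)` of a tensor on domain size 2. -/
def sigMatrix {n : ℕ} (R : (Fin n → Fin 2) → ℂ) (t : Fin n) :
    Matrix (Fin 2) ({s : Fin n // s ≠ t} → Fin 2) ℂ :=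
  Matrix.of fun b i => R fun s => if h : s = t then b else i ⟨s, h⟩

/-- The two-column matrix `A_{σ,τ}(R)`, with rows indexed by a position `t`
and an assignment of domain values to the remaining positions. -/
def Amat {n k : ℕ} (R : (Fin n → Fin k) → ℂ) (σ τ : Fin k) :
    Matrix (Σ t : Fin n, ({s : Fin n // s ≠ t} → Fin k)) (Fin 2) ℂ :=
  Matrix.of fun p c =>
    R fun s => if h : s = p.1 then (if c = 0 then σ else τ) else p.2 ⟨s, h⟩

/-- The column vector `b_w(R)`. -/
def bvec {n k : ℕ} (R : (Fin n → Fin k) → ℂ) (w : Fin k) :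
    (Σ t : Fin n, ({s : Fin n // s ≠ t} → Fin k)) → ℂ :=
  fun p => R fun s => if h : s = p.1 then w else p.2 ⟨s, h⟩

/-- The `2 × k` matrix `[[1,0,0,…,0],[0,1,0,…,0]]`. -/
def projMat (k : ℕ) : Matrix (Fin 2) (Fin k) ℂ :=
  Matrix.of fun r c => if (r : ℕ) = (c : ℕ) then 1 else 0


lemma fin2_cases' (a : Fin 2) : a = 0 ∨ a = 1 := by omega

lemma rtrans_comp {n : ℕ} {D E F : Type*} [Fintype D] [Fintype E]
    (M : Matrix D E ℂ) (N : Matrix E F ℂ) (R : (Fin n → D) → ℂ) :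
    rtrans (M * N) R = rtrans N (rtrans M R) := by
  funext i
  simp only [rtrans, Matrix.mul_apply, Finset.prod_univ_sum,
    Fintype.piFinset_univ, Finset.mul_sum, Finset.sum_mul,
    Finset.prod_mul_distrib]
  rw [Finset.sum_comm]
  exact Finset.sum_congr rfl fun c _ => Finset.sum_congr rfl fun j _ => by ring

lemma gtrans_comp {n : ℕ} {D E F : Type*} [Fintype E] [Fintype F]
    (M : Matrix D E ℂ) (N : Matrix E F ℂ) (G : (Fin n → F) → ℂ) :
    gtrans (M * N) G = gtrans M (gtrans N G) := by
  funext s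
  simp only [gtrans, Matrix.mul_apply, Finset.prod_univ_sum,
    Fintype.piFinset_univ, Finset.mul_sum, Finset.sum_mul,
    Finset.prod_mul_distrib]
  rw [Finset.sum_comm]
  exact Finset.sum_congr rfl fun c _ => Finset.sum_congr rfl fun j _ => by ring

lemma restrict_rtrans_proj {n k : ℕ} (hk : 2 ≤ k) (S : (Fin n → Fin 2) → ℂ) :
    restrict (rtrans (projMat k) S) ⟨0, by omega⟩ ⟨1, by omega⟩ = S := by
  funext j
  simp only [restrict, rtrans]
  rw [Fintype.sum_eq_single j]
  · have h1 : ∀ t, projMat k (j t)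
        (if j t = 0 then ⟨0, by omega⟩ else ⟨1, by omega⟩) = 1 := by
      intro t
      rcases fin2_cases' (j t) with h | h <;> simp [h, projMat]
    simp [h1]
  · intro j2 hj2
    obtain ⟨t, ht⟩ : ∃ t, j2 t ≠ j t := by
      by_contra h
      push_neg at h
      exact hj2 (funext h)
    have hz : projMat k (j2 t)
        (if j t = 0 then ⟨0, by omega⟩ else ⟨1, by omega⟩) = 0 := by
      rcases fin2_cases' (j2 t) with h2 | h2 <;>
        rcases fin2_cases' (j t) with h3 | h3 <;>
        simp_all [projMat]
    rw [Finset.prod_eq_zero (Finset.mem_univ t) hz, mul_zero]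

/-- If the checked signatures `Ř_i`, `Ǧ_j` are simultaneously
realizable on a `2^ℓ × 2` basis `M_{(2)}` of rank 2, then the original
signatures are simultaneously realizable on `M_{(2)} X_{σ,τ}`. -/
theorem lift_realizability {k ℓ n r g : ℕ} (hk : 3 ≤ k) (hℓ : 1 ≤ ℓ)
    (hr : 1 ≤ r) (R : Fin r → (Fin n → Fin k) → ℂ)
    (G : Fin g → (Fin n → Fin k) → ℂ)
    (R0 : Fin r → (Fin n → Fin (2 ^ ℓ)) → ℂ)
    (G0 : Fin g → (Fin n → Fin (2 ^ ℓ)) → ℂ)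
    (hnd : ¬ Degenerate (R ⟨0, hr⟩)) (σ τ : Fin k) (hστ : σ ≠ τ)
    (X : Matrix (Fin 2) (Fin k) ℂ) (hXrank : X.rank = 2)
    (hRX : ∀ i, R i = rtrans X (restrict (R i) σ τ))
    (X' : Matrix (Fin k) (Fin k) ℂ) (hinv : IsUnit X'.det)
    (hXX' : X * X' = projMat k)
    (M2 : Matrix (Fin (2 ^ ℓ)) (Fin 2) ℂ) (hM2 : M2.rank = 2)
    (hRch : ∀ i, restrict (rtrans X' (R i)) ⟨0, by omega⟩ ⟨1, by omega⟩ =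
        rtrans M2 (R0 i))
    (hGch : ∀ j, gtrans M2
        (restrict (gtrans X'⁻¹ (G j)) ⟨0, by omega⟩ ⟨1, by omega⟩) = G0 j) :
    (∀ i, R i = rtrans (M2 * X) (R0 i)) ∧
    (∀ j, gtrans (M2 * X) (G j) = G0 j) := by
  have hk2 : 2 ≤ k := by omega
  have hX : X = projMat k * X'⁻¹ := by
    rw [← hXX', Matrix.mul_assoc, Matrix.mul_nonsing_inv X' hinv, Matrix.mul_one]
  have hXrow : ∀ (b : Fin 2) (c : Fin k),
      X b c = X'⁻¹ (if b = 0 then ⟨0, by omega⟩ else ⟨1, by omega⟩) c := by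
    intro b c
    rw [hX]
    rw [Matrix.mul_apply, Finset.sum_eq_single
      (if b = 0 then (⟨0, by omega⟩ : Fin k) else ⟨1, by omega⟩)]
    · rcases fin2_cases' b with h | h <;> simp [h, projMat]
    · intro d _ hd
      have hz : projMat k b d = 0 := by
        simp only [projMat, Matrix.of_apply, ite_eq_right_iff]
        intro hv
        exfalso
        apply hd
        apply Fin.ext
        rcases fin2_cases' b with h | h <;> subst h <;> simp at hv ⊢ <;> omega
      rw [hz, zero_mul]
    · intro h
      exact absurd (Finset.mem_univ _) h
  have hRcore : ∀ i,
      restrict (rtrans X' (R i)) ⟨0, by omega⟩ ⟨1, by omega⟩ =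
        restrict (R i) σ τ := by
    intro i
    conv_lhs => rw [hRX i, ← rtrans_comp, hXX']
    exact restrict_rtrans_proj hk2 _
  have hGcore : ∀ j,
      gtrans X (G j) = restrict (gtrans X'⁻¹ (G j)) ⟨0, by omega⟩ ⟨1, by omega⟩ := by
    intro j
    funext s
    simp only [restrict, gtrans]
    refine Finset.sum_congr rfl fun i _ => ?_
    congr 1
    exact Finset.prod_congr rfl fun t _ => hXrow (s t) (i t)
  constructor
  · intro i
    rw [rtrans_comp, ← hRch i, hRcore i, ← hRX i]
  · intro j
    rw [gtrans_comp, hGcore j, hGch j]
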